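/- Suppose the stationary measure ℙ satisfies conditions ID, FE and KB, and let ℚ be a stationary measure with supp ℚ ⊆ supp ℙ. Let ε ∈ (0,1/2) and y ∈ supp ℚ be arbitrary, and let ĉ_N be the number of words in the upper-bound auxiliary parsing of y_1^N. Then Σ_{N=1}^∞ ℙ{x : c_N(y|x) > ĉ_N} < ∞. -/

import Mathlib

open MeasureTheory Filter Asymptotics
open scoped ENNReal Classical

noncomputable section

namespace ZM

/-- The left shift on one-sided sequences. -/
def shift {A : Type*} (x : ℕ → A) : ℕ → A := fun k => x (k + 1)

/-- The cylinder set of all sequences starting with the word `a`. -/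
def cyl {A : Type*} {n : ℕ} (a : Fin n → A) : Set (ℕ → A) := {x | ∀ i : Fin n, x i = a i}

/-- The word `x_{p+1}^{p+ℓ}` of `x` (0-based: the letters at positions `p, …, p+ℓ-1`). -/
def seg {A : Type*} (y : ℕ → A) (p ℓ : ℕ) : Fin ℓ → A := fun i => y (p + i)

/-- `w` occurs in `x` at (0-based) offset `r`. -/
def matchAt {A : Type*} (x : ℕ → A) {ℓ : ℕ} (w : Fin ℓ → A) (r : ℕ) : Prop :=
  ∀ i : Fin ℓ, x (r + i) = w i

/-- `w` appears as a substring of `x_1^N`. -/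
def appears {A : Type*} (N : ℕ) (x : ℕ → A) {ℓ : ℕ} (w : Fin ℓ → A) : Prop :=
  ∃ r, r + ℓ ≤ N ∧ matchAt x w r

/-- The waiting time `W_ℓ(w, x)`: the least (1-based) position at which `w` occurs in `x`,
`⊤` if `w` never occurs. -/
def W {A : Type*} {ℓ : ℕ} (w : Fin ℓ → A) (x : ℕ → A) : ℕ∞ :=
  sInf {r : ℕ∞ | ∃ n : ℕ, r = (n : ℕ∞) ∧ 1 ≤ n ∧ matchAt x w (n - 1)}

section ZMparsing

variable {A : Type*}

/-- Length of the Ziv–Merhav word starting at (0-based) position `p` of `y_1^N`, with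
database `x_1^N`: the longest prefix of the remaining portion of `y_1^N` appearing as a
substring of `x_1^N`, or a single letter if there is no such prefix. -/
def zmLen (N : ℕ) (x y : ℕ → A) (p : ℕ) : ℕ :=
  max 1 (sSup {ℓ | p + ℓ ≤ N ∧ appears N x (seg y p ℓ)})

/-- Starting position of the `j`-th (0-based) word of the Ziv–Merhav parsing. -/
def zmPos (N : ℕ) (x y : ℕ → A) : ℕ → ℕ
  | 0 => 0
  | j + 1 => zmPos N x y j + zmLen N x y (zmPos N x y j)

/-- `c_N(y|x)`: the number of words in the Ziv–Merhav parsing of `y_1^N` w.r.t. `x_1^N`. -/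
def cN (N : ℕ) (x y : ℕ → A) : ℕ := sInf {c | N ≤ zmPos N x y c}

/-- The Ziv–Merhav estimator `Q̂_N(y, x) = c_N(y|x) ln N / N`. -/
def ZMest (N : ℕ) (x y : ℕ → A) : ℝ := (cN N x y : ℝ) * Real.log N / N

end ZMparsing

section MeasureDefs

variable {A : Type*} [MeasurableSpace A]

/-- The measure of the cylinder of a word, as a real number. -/
def wp (μ : Measure (ℕ → A)) {n : ℕ} (a : Fin n → A) : ℝ := (μ (cyl a)).toReal

/-- `supp ℙ`: the set of sequences all of whose prefixes have positive measure. -/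
def suppSet (μ : Measure (ℕ → A)) : Set (ℕ → A) := {x | ∀ n, 0 < μ (cyl (seg x 0 n))}

/-- Condition (ID): immediate decoupling on the support, with sequence `k`. -/
def CondID (μ : Measure (ℕ → A)) (k : ℕ → ℝ) : Prop :=
  Monotone k ∧ (k =o[atTop] fun n => (n : ℝ)) ∧
    ∀ (n m : ℕ) (a : Fin n → A) (b : Fin m → A), 0 < μ (cyl a) → 0 < μ (cyl b) →
      wp μ (Fin.append a b) ≤ Real.exp (k n) * (wp μ a * wp μ b) ∧
      (0 < μ (cyl (Fin.append a b)) →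
        Real.exp (-k n) * (wp μ a * wp μ b) ≤ wp μ (Fin.append a b))

/-- Condition (FE): fast enough decay, with rate `γp < 0`. -/
def CondFE (μ : Measure (ℕ → A)) (γp : ℝ) : Prop :=
  γp < 0 ∧ ∀ᶠ n : ℕ in atTop, ∀ a : Fin n → A, 0 < μ (cyl a) → wp μ a ≤ Real.exp (γp * n)

/-- Condition (SE): slow enough decay, with rate `γm < 0`. -/
def CondSE (μ : Measure (ℕ → A)) (γm : ℝ) : Prop :=
  γm < 0 ∧ ∀ᶠ n : ℕ in atTop, ∀ a : Fin n → A, 0 < μ (cyl a) → Real.exp (γm * n) ≤ wp μ a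

/-- Condition (KB): Kontoyiannis' bound on waiting times, with sequences `k`, `τ`. -/
def CondKB (μ : Measure (ℕ → A)) (k τ : ℕ → ℝ) : Prop :=
  (k =o[atTop] fun n => (n : ℝ)) ∧ (τ =o[atTop] fun n => (n : ℝ)) ∧
    ∀ (ℓ : ℕ) (a : Fin ℓ → A) (r : ℕ),
      (μ {x | (r : ℕ∞) ≤ W a x}).toReal ≤
        Real.exp (-(Real.exp (-k ℓ) * wp μ a * (⌊((r : ℝ) - 1) / ((ℓ : ℝ) + τ ℓ)⌋ : ℝ)))

/-- Length of the next word of the auxiliary parsing of `y_1^N` starting at position `p`: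
the shortest prefix of the remaining portion of `y_1^N` with measure at most `θ`, or the
whole remaining portion if there is no such prefix. -/
def auxLen (μ : Measure (ℕ → A)) (θ : ℝ) (N : ℕ) (y : ℕ → A) (p : ℕ) : ℕ :=
  if ∃ ℓ, 1 ≤ ℓ ∧ p + ℓ ≤ N ∧ wp μ (seg y p ℓ) ≤ θ then
    sInf {ℓ | 1 ≤ ℓ ∧ p + ℓ ≤ N ∧ wp μ (seg y p ℓ) ≤ θ}
  else N - p

/-- Starting position of the `j`-th (0-based) word of the auxiliary parsing. -/
def auxPos (μ : Measure (ℕ → A)) (θ : ℝ) (N : ℕ) (y : ℕ → A) : ℕ → ℕ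
  | 0 => 0
  | j + 1 => auxPos μ θ N y j + max 1 (auxLen μ θ N y (auxPos μ θ N y j))

/-- Length of the `j`-th (0-based) word of the auxiliary parsing. -/
def auxWordLen (μ : Measure (ℕ → A)) (θ : ℝ) (N : ℕ) (y : ℕ → A) (j : ℕ) : ℕ :=
  max 1 (auxLen μ θ N y (auxPos μ θ N y j))

/-- The number of words in the auxiliary parsing of `y_1^N`. -/
def auxCount (μ : Measure (ℕ → A)) (θ : ℝ) (N : ℕ) (y : ℕ → A) : ℕ :=
  sInf {c | N ≤ auxPos μ θ N y c}

/-- Length of the next word of the block parsing within a block ending at position `e`: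
the shortest prefix of the remaining portion of the block with measure at most `θ`;
`0` encodes that no such prefix exists (the rest of the block is the buffer). -/
def blkLen (μ : Measure (ℕ → A)) (θ : ℝ) (e : ℕ) (y : ℕ → A) (p : ℕ) : ℕ :=
  sInf {ℓ | 1 ≤ ℓ ∧ p + ℓ ≤ e ∧ wp μ (seg y p ℓ) ≤ θ}

/-- Starting position of the `i`-th (0-based) word of the block starting at `q`, ending at `e`. -/
def blkPos (μ : Measure (ℕ → A)) (θ : ℝ) (e : ℕ) (y : ℕ → A) (q : ℕ) : ℕ → ℕ
  | 0 => q
  | i + 1 => blkPos μ θ e y q i + blkLen μ θ e y (blkPos μ θ e y q i)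

/-- Number `d_s` of words in the block starting at `q` and ending at `e`. -/
def dCount (μ : Measure (ℕ → A)) (θ : ℝ) (e : ℕ) (y : ℕ → A) (q : ℕ) : ℕ :=
  sInf {i | blkLen μ θ e y (blkPos μ θ e y q i) = 0}

/-- The block starting at `q` and ending at `e` is good: its parsed words are pairwise
distinct. -/
def GoodBlock (μ : Measure (ℕ → A)) (θ : ℝ) (e : ℕ) (y : ℕ → A) (q : ℕ) : Prop :=
  ∀ i j : ℕ, i < dCount μ θ e y q → j < dCount μ θ e y q →
    blkLen μ θ e y (blkPos μ θ e y q i) = blkLen μ θ e y (blkPos μ θ e y q j) →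
    (∀ t < blkLen μ θ e y (blkPos μ θ e y q i),
      y (blkPos μ θ e y q i + t) = y (blkPos μ θ e y q j + t)) →
    i = j

end MeasureDefs

/-- The block length `⌊N^α⌋`. -/
def blockB (N : ℕ) (α : ℝ) : ℕ := ⌊(N : ℝ) ^ α⌋₊

/-- The number `M_N` of blocks. -/
def blockM (N : ℕ) (α : ℝ) : ℕ := (N + blockB N α - 1) / blockB N α

/-- The starting position of the `s`-th (0-based) block. -/
def blockStart (N : ℕ) (α : ℝ) (s : ℕ) : ℕ := s * blockB N α

/-- The end position of the `s`-th (0-based) block. -/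
def blockEnd (N : ℕ) (α : ℝ) (s : ℕ) : ℕ := min ((s + 1) * blockB N α) N

/-- `S_b(y_1^N)`: the set of bad blocks of the block auxiliary parsing (with threshold
`N^{-1-ε}`, word probabilities computed with `μ`). -/
def badSet {A : Type*} [MeasurableSpace A] (μ : Measure (ℕ → A)) (N : ℕ) (α ε : ℝ)
    (y : ℕ → A) : Set ℕ :=
  {s | s < blockM N α ∧
    ¬ GoodBlock μ ((N : ℝ) ^ (-1 - ε)) (blockEnd N α s) y (blockStart N α s)}

/-- `ℓ₋ = ln N / (-2 γ₋)`. -/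
def ellMinus (N : ℕ) (γm : ℝ) : ℝ := Real.log N / (-2 * γm)

/-- `ℓ₊ = 2 ln N / (-γ₊)`. -/
def ellPlus (N : ℕ) (γp : ℝ) : ℝ := 2 * Real.log N / (-γp)

/-- `d₊ = 2 N^α / ℓ₋`. -/
def dPlus (N : ℕ) (α γm : ℝ) : ℝ := 2 * (N : ℝ) ^ α / ellMinus N γm

section CrossEntropy

variable {A : Type*} [MeasurableSpace A] [Fintype A]

/-- The `n`-th cross-entropy average `-(1/n) ∑_{a ∈ 𝒜ⁿ} ℚ[a] ln ℙ[a]`, real-valued version. -/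
def hcSeq (μP μQ : Measure (ℕ → A)) (n : ℕ) : ℝ :=
  -(1 / (n : ℝ)) * ∑ a : Fin n → A, wp μQ a * Real.log (wp μP a)

/-- `-ln p` as an element of `[0, ∞]`, for `p ∈ [0, 1]`; equals `⊤` when `p = 0`. -/
def negLog (p : ℝ≥0∞) : ℝ≥0∞ := if p = 0 then ⊤ else ENNReal.ofReal (-Real.log p.toReal)

/-- The `n`-th cross-entropy average, `[0, ∞]`-valued version. -/
def hcSeqE (μP μQ : Measure (ℕ → A)) (n : ℕ) : ℝ≥0∞ :=
  (∑ a : Fin n → A, μQ (cyl a) * negLog (μP (cyl a))) / (n : ℝ≥0∞)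

end CrossEntropy

end ZM

namespace ZM


/-! ### Auxiliary lemmas -/

section Aux

variable {A : Type*}

lemma shift_iterate (p : ℕ) (x : ℕ → A) (k : ℕ) : (shift^[p]) x k = x (k + p) := by
  induction p generalizing x k with
  | zero => rfl
  | succ n ih =>
      rw [Function.iterate_succ']
      simp only [Function.comp_apply, shift]
      rw [ih]
      congr 1
      omega

lemma seg_append (y : ℕ → A) (p n m : ℕ) :
    Fin.append (seg y p n) (seg y (p + n) m) = seg y p (n + m) := by
  funext i
  rcases i with ⟨i, hi⟩
  by_cases h : i < n
  · have h1 : Fin.append (seg y p n) (seg y (p + n) m) (Fin.castAdd m ⟨i, h⟩)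
        = seg y p n ⟨i, h⟩ := Fin.append_left _ _ _
    have h2 : (Fin.castAdd m ⟨i, h⟩ : Fin (n + m)) = ⟨i, hi⟩ := rfl
    rw [h2] at h1
    rw [h1]; rfl
  · have hj : i - n < m := by omega
    have h1 : Fin.append (seg y p n) (seg y (p + n) m) (Fin.natAdd n ⟨i - n, hj⟩)
        = seg y (p + n) m ⟨i - n, hj⟩ := Fin.append_right _ _ _
    have h2 : (Fin.natAdd n ⟨i - n, hj⟩ : Fin (n + m)) = ⟨i, hi⟩ := by
      ext; simp; omega
    rw [h2] at h1
    rw [h1]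
    show y (p + n + (i - n)) = y (p + i)
    congr 1; omega

section ParseLemmas

variable [MeasurableSpace A] (μ : Measure (ℕ → A)) (θ : ℝ) (N : ℕ) (y : ℕ → A)

lemma auxPos_lt_succ (j : ℕ) : auxPos μ θ N y j < auxPos μ θ N y (j + 1) := by
  have : 1 ≤ max 1 (auxLen μ θ N y (auxPos μ θ N y j)) := le_max_left _ _
  show auxPos μ θ N y j < auxPos μ θ N y j + _
  omega

lemma le_auxPos (j : ℕ) : j ≤ auxPos μ θ N y j := by
  induction j with
  | zero => exact Nat.zero_le _
  | succ n ih => have := auxPos_lt_succ μ θ N y n; omega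

lemma auxPos_mono : Monotone (auxPos μ θ N y) := by
  apply monotone_nat_of_le_succ
  intro n; exact (auxPos_lt_succ μ θ N y n).le

lemma auxLen_eq_of_ex (p : ℕ)
    (hex : ∃ ℓ, 1 ≤ ℓ ∧ p + ℓ ≤ N ∧ wp μ (seg y p ℓ) ≤ θ) :
    auxLen μ θ N y p = sInf {ℓ | 1 ≤ ℓ ∧ p + ℓ ≤ N ∧ wp μ (seg y p ℓ) ≤ θ} := by
  unfold auxLen
  split
  · rfl
  · next hne => exact absurd hex hne

lemma auxLen_eq_of_nex (p : ℕ)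
    (hex : ¬ ∃ ℓ, 1 ≤ ℓ ∧ p + ℓ ≤ N ∧ wp μ (seg y p ℓ) ≤ θ) :
    auxLen μ θ N y p = N - p := by
  unfold auxLen
  split
  · next hpos => exact absurd hpos hex
  · rfl

lemma auxPos_succ_le (j : ℕ) (h : auxPos μ θ N y j < N) : auxPos μ θ N y (j + 1) ≤ N := by
  have hgoal : auxPos μ θ N y (j + 1)
      = auxPos μ θ N y j + max 1 (auxLen μ θ N y (auxPos μ θ N y j)) := rfl
  set q := auxPos μ θ N y j with hq
  by_cases hex : ∃ ℓ, 1 ≤ ℓ ∧ q + ℓ ≤ N ∧ wp μ (seg y q ℓ) ≤ θ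
  · have hlen := auxLen_eq_of_ex μ θ N y q hex
    have hmem : sInf {ℓ | 1 ≤ ℓ ∧ q + ℓ ≤ N ∧ wp μ (seg y q ℓ) ≤ θ}
        ∈ {ℓ | 1 ≤ ℓ ∧ q + ℓ ≤ N ∧ wp μ (seg y q ℓ) ≤ θ} := Nat.sInf_mem hex
    obtain ⟨h1, h2, -⟩ := hmem
    omega
  · have hlen := auxLen_eq_of_nex μ θ N y q hex
    omega

lemma auxCount_spec : N ≤ auxPos μ θ N y (auxCount μ θ N y) := by
  have hne : {c | N ≤ auxPos μ θ N y c}.Nonempty := ⟨N, le_auxPos μ θ N y N⟩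
  exact Nat.sInf_mem hne

lemma auxCount_le : auxCount μ θ N y ≤ N :=
  Nat.sInf_le (show N ∈ {c | N ≤ auxPos μ θ N y c} from le_auxPos μ θ N y N)

lemma lt_auxCount_of_pos_lt (j : ℕ) (h : auxPos μ θ N y j < N) : j < auxCount μ θ N y := by
  by_contra hc
  push_neg at hc
  have h1 : auxPos μ θ N y (auxCount μ θ N y) ≤ auxPos μ θ N y j := auxPos_mono μ θ N y hc
  have h2 := auxCount_spec μ θ N y
  omega

lemma auxPos_lt_of_lt_auxCount (j : ℕ) (h : j < auxCount μ θ N y) : auxPos μ θ N y j < N := by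
  by_contra hc
  push_neg at hc
  have hle : auxCount μ θ N y ≤ j :=
    Nat.sInf_le (show j ∈ {c | N ≤ auxPos μ θ N y c} from hc)
  omega

lemma auxWordLen_ge2_pos_lt (j : ℕ) (h : 2 ≤ auxWordLen μ θ N y j) : auxPos μ θ N y j < N := by
  by_contra hc
  push_neg at hc
  set q := auxPos μ θ N y j with hq
  have hword : auxWordLen μ θ N y j = max 1 (auxLen μ θ N y q) := rfl
  have hex : ¬ ∃ ℓ, 1 ≤ ℓ ∧ q + ℓ ≤ N ∧ wp μ (seg y q ℓ) ≤ θ := by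
    rintro ⟨ℓ, h1, h2, -⟩
    omega
  have hlen := auxLen_eq_of_nex μ θ N y q hex
  omega

/-- Dichotomy for the auxiliary word starting at position `q = auxPos j < N`. -/
lemma auxWord_dichotomy (j : ℕ) (h : auxPos μ θ N y j < N) :
    (wp μ (seg y (auxPos μ θ N y j) (auxWordLen μ θ N y j)) ≤ θ ∧
      (2 ≤ auxWordLen μ θ N y j →
        θ < wp μ (seg y (auxPos μ θ N y j) (auxWordLen μ θ N y j - 1)))) ∨
    θ < wp μ (seg y (auxPos μ θ N y j) (auxWordLen μ θ N y j)) := by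
  set q := auxPos μ θ N y j with hq
  have hword : auxWordLen μ θ N y j = max 1 (auxLen μ θ N y q) := rfl
  by_cases hex : ∃ ℓ, 1 ≤ ℓ ∧ q + ℓ ≤ N ∧ wp μ (seg y q ℓ) ≤ θ
  · left
    have hlen := auxLen_eq_of_ex μ θ N y q hex
    have hmem : sInf {ℓ | 1 ≤ ℓ ∧ q + ℓ ≤ N ∧ wp μ (seg y q ℓ) ≤ θ}
        ∈ {ℓ | 1 ≤ ℓ ∧ q + ℓ ≤ N ∧ wp μ (seg y q ℓ) ≤ θ} := Nat.sInf_mem hex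
    obtain ⟨h1, h2, h3⟩ := hmem
    have hmax : auxWordLen μ θ N y j
        = sInf {ℓ | 1 ≤ ℓ ∧ q + ℓ ≤ N ∧ wp μ (seg y q ℓ) ≤ θ} := by
      rw [hword, hlen]; omega
    rw [hmax]
    refine ⟨h3, fun h2' => ?_⟩
    by_contra hcon
    push_neg at hcon
    have hmem2 : sInf {ℓ | 1 ≤ ℓ ∧ q + ℓ ≤ N ∧ wp μ (seg y q ℓ) ≤ θ} - 1
        ∈ {ℓ | 1 ≤ ℓ ∧ q + ℓ ≤ N ∧ wp μ (seg y q ℓ) ≤ θ} := by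
      exact ⟨by omega, by omega, hcon⟩
    have := Nat.sInf_le hmem2
    omega
  · right
    have hlen := auxLen_eq_of_nex μ θ N y q hex
    push_neg at hex
    have hmax : auxWordLen μ θ N y j = N - q := by rw [hword, hlen]; omega
    rw [hmax]
    by_contra hcon
    push_neg at hcon
    exact absurd (hex (N - q) (by omega) (by omega)) (not_lt.mpr hcon)

end ParseLemmas

section ZMLemmas

variable (N : ℕ) (x y : ℕ → A)

lemma one_le_zmLen (p : ℕ) : 1 ≤ zmLen N x y p := le_max_left _ _

lemma appears_infix {q L p ℓ' : ℕ} (h : appears N x (seg y q L)) (hqp : q ≤ p)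
    (hle : p + ℓ' ≤ q + L) : appears N x (seg y p ℓ') := by
  obtain ⟨r, hr, hm⟩ := h
  refine ⟨r + (p - q), by omega, fun i => ?_⟩
  have hi : p - q + i.1 < L := by omega
  have := hm ⟨p - q + i.1, hi⟩
  simp only [seg] at this ⊢
  rw [show r + (p - q) + i.1 = r + (p - q + i.1) from by omega, this,
    show q + (p - q + i.1) = p + i.1 from by omega]

lemma zmLen_ge {p ℓ' : ℕ} (h1 : p + ℓ' ≤ N) (h2 : appears N x (seg y p ℓ')) :
    ℓ' ≤ zmLen N x y p := by
  have hbdd : BddAbove {ℓ | p + ℓ ≤ N ∧ appears N x (seg y p ℓ)} :=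
    ⟨N, fun ℓ hℓ => by have := hℓ.1; omega⟩
  exact le_trans (le_csSup hbdd ⟨h1, h2⟩) (le_max_right _ _)

variable {A : Type*} [MeasurableSpace A]

/-- The combinatorial core: if every auxiliary word of length ≥ 2 appears in `x_1^N`,
then the Ziv–Merhav parsing has at most as many words as the auxiliary parsing. -/
lemma cN_le_auxCount_of_appears (μ : Measure (ℕ → A)) (θ : ℝ) (N : ℕ) (x y : ℕ → A)
    (H : ∀ j, auxPos μ θ N y j < N → 2 ≤ auxWordLen μ θ N y j →
      appears N x (seg y (auxPos μ θ N y j) (auxWordLen μ θ N y j))) :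
    cN N x y ≤ auxCount μ θ N y := by
  have key : ∀ j, auxPos μ θ N y j ≤ zmPos N x y j := by
    intro j
    induction j with
    | zero => rfl
    | succ j ih =>
        set q := auxPos μ θ N y j with hqdef
        set p := zmPos N x y j with hpdef
        have hzl := one_le_zmLen N x y p
        have hzm : zmPos N x y (j + 1) = p + zmLen N x y p := rfl
        have haux : auxPos μ θ N y (j + 1) = q + auxWordLen μ θ N y j := rfl
        by_cases hcase : auxPos μ θ N y (j + 1) ≤ p + 1
        · omega
        · push_neg at hcase
          set L := auxWordLen μ θ N y j with hLdef
          have hL2 : 2 ≤ L := by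
            have h1 : 1 ≤ L := le_max_left _ _
            omega
          have hqN : q < N := auxWordLen_ge2_pos_lt μ θ N y j hL2
          have happ := H j hqN hL2
          have hqLN : q + L ≤ N := by
            have := auxPos_succ_le μ θ N y j hqN
            omega
          have hℓ' : p + (q + L - p) ≤ q + L := by omega
          have happ' : appears N x (seg y p (q + L - p)) :=
            appears_infix N x y happ ih hℓ'
          have := zmLen_ge N x y (p := p) (ℓ' := q + L - p) (by omega) happ'
          omega
  have h1 : N ≤ zmPos N x y (auxCount μ θ N y) :=
    le_trans (auxCount_spec μ θ N y) (key _)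
  exact Nat.sInf_le h1

end ZMLemmas

end Aux

section MeasAux

variable {A : Type*} [MeasurableSpace A]

lemma wp_nonneg (μ : Measure (ℕ → A)) {n : ℕ} (a : Fin n → A) : 0 ≤ wp μ a :=
  ENNReal.toReal_nonneg

lemma wp_pos (μ : Measure (ℕ → A)) [IsFiniteMeasure μ] {n : ℕ} (a : Fin n → A)
    (h : 0 < μ (cyl a)) : 0 < wp μ a :=
  ENNReal.toReal_pos h.ne' (measure_ne_top μ _)

/-- Positivity of the measure of every infix of `y`, from positivity of prefixes. -/
lemma seg_pos {μ : Measure (ℕ → A)} (hstat : MeasurePreserving shift μ μ) {y : ℕ → A}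
    (hy : ∀ n, 0 < μ (cyl (seg y 0 n))) (p ℓ : ℕ) : 0 < μ (cyl (seg y p ℓ)) := by
  have hsub : cyl (seg y 0 (p + ℓ)) ⊆ (shift^[p]) ⁻¹' (cyl (seg y p ℓ)) := by
    intro x hx i
    show (shift^[p]) x i.1 = seg y p ℓ i
    rw [shift_iterate]
    have h2 := hx ⟨i.1 + p, by omega⟩
    show x (i.1 + p) = y (p + i.1)
    rw [h2]
    show y (0 + (i.1 + p)) = y (p + i.1)
    congr 1; omega
  have h1 : μ (cyl (seg y 0 (p + ℓ))) ≤ μ ((shift^[p]) ⁻¹' (cyl (seg y p ℓ))) :=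
    measure_mono hsub
  have h2 : μ ((shift^[p]) ⁻¹' (cyl (seg y p ℓ))) ≤ (μ.map (shift^[p])) (cyl (seg y p ℓ)) :=
    Measure.le_map_apply (hstat.iterate p).measurable.aemeasurable _
  rw [(hstat.iterate p).map_eq] at h2
  exact lt_of_lt_of_le (hy (p + ℓ)) (le_trans h1 h2)

/-- A uniform positive lower bound on probabilities of all infixes of `y` of length `m`. -/
lemma exists_rho [Fintype A] (μ : Measure (ℕ → A)) [IsProbabilityMeasure μ] (y : ℕ → A)
    (hpos : ∀ p ℓ, 0 < μ (cyl (seg y p ℓ))) (m : ℕ) :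
    ∃ ρ : ℝ, 0 < ρ ∧ ∀ p, ρ ≤ wp μ (seg y p m) := by
  classical
  set s : Finset (Fin m → A) := Finset.univ.filter (fun a => 0 < wp μ a) with hs
  have hmem : ∀ p, seg y p m ∈ s := by
    intro p
    simp only [hs, Finset.mem_filter, Finset.mem_univ, true_and]
    exact wp_pos μ _ (hpos p m)
  have hne : s.Nonempty := ⟨seg y 0 m, hmem 0⟩
  refine ⟨s.inf' hne (wp μ), ?_, fun p => Finset.inf'_le _ (hmem p)⟩
  rw [Finset.lt_inf'_iff]
  intro a ha
  simp only [hs, Finset.mem_filter, Finset.mem_univ, true_and] at ha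
  exact ha

lemma not_appears_W_le {N ℓ : ℕ} {x : ℕ → A} (w : Fin ℓ → A) (hℓ : ℓ ≤ N)
    (h : ¬ appears N x w) :
    ((N - ℓ + 2 : ℕ) : ℕ∞) ≤ W w x := by
  apply le_sInf
  rintro r ⟨n, rfl, hn1, hm⟩
  have h1 : ¬ (n - 1 + ℓ ≤ N) := fun hc => h ⟨n - 1, hc, hm⟩
  exact_mod_cast Nat.cast_le.mpr (show N - ℓ + 2 ≤ n by omega)

/-- The Kontoyiannis bound applied to non-appearance of a word. -/
lemma measure_not_appears_le (μ : Measure (ℕ → A)) [IsProbabilityMeasure μ]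
    (kKB τKB : ℕ → ℝ)
    (hKB : ∀ (ℓ : ℕ) (a : Fin ℓ → A) (r : ℕ),
      (μ {x | (r : ℕ∞) ≤ W a x}).toReal ≤
        Real.exp (-(Real.exp (-kKB ℓ) * wp μ a * (⌊((r : ℝ) - 1) / ((ℓ : ℝ) + τKB ℓ)⌋ : ℝ))))
    (N ℓ : ℕ) (hℓ : ℓ ≤ N) (w : Fin ℓ → A) :
    μ {x | ¬ appears N x w} ≤ ENNReal.ofReal (Real.exp (-(Real.exp (-kKB ℓ) * wp μ w *
      (⌊(((N - ℓ + 2 : ℕ) : ℝ) - 1) / ((ℓ : ℝ) + τKB ℓ)⌋ : ℝ)))) := by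
  have hsub : {x : ℕ → A | ¬ appears N x w} ⊆ {x | ((N - ℓ + 2 : ℕ) : ℕ∞) ≤ W w x} :=
    fun x hx => not_appears_W_le w hℓ hx
  refine le_trans (measure_mono hsub) ?_
  rw [ENNReal.le_ofReal_iff_toReal_le (measure_ne_top μ _) (Real.exp_nonneg _)]
  exact hKB ℓ w (N - ℓ + 2)

end MeasAux



section AnalyticAux

open Real

/-- A little-o function of `n` is bounded by any positive linear function plus a constant. -/
lemma littleo_linear {f : ℕ → ℝ} (h : f =o[atTop] fun n => (n : ℝ)) {δ : ℝ} (hδ : 0 < δ) :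
    ∃ C, 0 ≤ C ∧ ∀ n, f n ≤ δ * n + C := by
  have h1 := h.def hδ
  rw [eventually_atTop] at h1
  obtain ⟨n₁, hn₁⟩ := h1
  refine ⟨∑ i ∈ Finset.range n₁, |f i|, by positivity, fun n => ?_⟩
  by_cases hn : n₁ ≤ n
  · have h2 := hn₁ n hn
    rw [Real.norm_eq_abs, Real.norm_eq_abs, abs_of_nonneg (by positivity : (0:ℝ) ≤ (n:ℝ))] at h2
    have h3 : f n ≤ δ * n := le_trans (le_abs_self _) h2
    have h4 : (0:ℝ) ≤ ∑ i ∈ Finset.range n₁, |f i| := by positivity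
    linarith
  · have h3 : |f n| ≤ ∑ i ∈ Finset.range n₁, |f i| :=
      Finset.single_le_sum (f := fun i => |f i|) (fun i _ => abs_nonneg _)
        (Finset.mem_range.mpr (by omega))
    have h4 : (0:ℝ) ≤ δ * n := by positivity
    have := le_abs_self (f n)
    linarith

lemma log_linear_ev (a b : ℝ) (ha : 0 < a) : ∀ᶠ x : ℝ in atTop, b + a * Real.log x ≤ x := by
  have h1 := Real.isLittleO_log_id_atTop.def (show (0:ℝ) < 1 / (2 * a) by positivity)
  filter_upwards [h1, eventually_ge_atTop (max 0 (2 * b))] with x hx hx'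
  have hx0 : (0:ℝ) ≤ x := le_trans (le_max_left _ _) hx'
  rw [Real.norm_eq_abs, Real.norm_eq_abs, id, abs_of_nonneg hx0] at hx
  have h2 : Real.log x ≤ 1 / (2 * a) * x := le_trans (le_abs_self _) hx
  have h3 : a * Real.log x ≤ x / 2 := by
    rw [div_eq_mul_inv] at h2 ⊢
    calc a * Real.log x ≤ a * (1 / (2 * a) * x) := by
          exact mul_le_mul_of_nonneg_left h2 ha.le
    _ = x * 2⁻¹ := by field_simp
  have h4 : b ≤ x / 2 := by
    have := le_trans (le_max_right 0 (2 * b)) hx'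
    linarith
  linarith

lemma log_rpow_ev (a b c : ℝ) (hc : 0 < c) :
    ∀ᶠ x : ℝ in atTop, b + a * Real.log x ≤ x ^ c := by
  have h1 := (isLittleO_log_rpow_atTop hc).def
    (show (0:ℝ) < 1 / (2 * (|a| + 1)) by positivity)
  have h2 := (tendsto_rpow_atTop hc).eventually_ge_atTop (2 * b)
  filter_upwards [h1, h2, eventually_ge_atTop (1:ℝ)] with x hx hx2 hx1
  have hx0 : (0:ℝ) ≤ x := le_trans zero_le_one hx1
  have hxc0 : (0:ℝ) ≤ x ^ c := Real.rpow_nonneg hx0 _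
  rw [Real.norm_eq_abs, Real.norm_eq_abs, abs_of_nonneg hxc0] at hx
  have h3 : a * Real.log x ≤ (|a| + 1) * |Real.log x| := by
    calc a * Real.log x ≤ |a * Real.log x| := le_abs_self _
    _ = |a| * |Real.log x| := abs_mul _ _
    _ ≤ (|a| + 1) * |Real.log x| := by
        have := abs_nonneg (Real.log x); nlinarith [abs_nonneg a]
  have h4 : (|a| + 1) * |Real.log x| ≤ x ^ c / 2 := by
    have hA : (0:ℝ) < |a| + 1 := by positivity
    calc (|a| + 1) * |Real.log x| ≤ (|a| + 1) * (1 / (2 * (|a| + 1)) * x ^ c) :=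
          mul_le_mul_of_nonneg_left hx hA.le
    _ = x ^ c / 2 := by field_simp
  linarith

lemma pow_exp_ev {c : ℝ} (hc : 0 < c) :
    ∀ᶠ x : ℝ in atTop, x ^ (3:ℝ) * Real.exp (-(x ^ c)) ≤ 1 := by
  obtain ⟨k, hk⟩ : ∃ k : ℕ, 3 ≤ c * k := by
    obtain ⟨k, hk⟩ := exists_nat_ge (3 / c)
    exact ⟨k, by rw [← div_le_iff₀' hc] ; exact hk⟩
  have h1 := tendsto_pow_mul_exp_neg_atTop_nhds_zero k
  have h2 : Tendsto (fun x : ℝ => x ^ c) atTop atTop := tendsto_rpow_atTop hc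
  have h3 : ∀ᶠ x : ℝ in atTop, (x ^ c) ^ k * Real.exp (-(x ^ c)) < 1 :=
    (h1.comp h2).eventually_lt_const one_pos
  filter_upwards [h3, eventually_ge_atTop (1:ℝ)] with x hx hx1
  have hx0 : (0:ℝ) ≤ x := le_trans zero_le_one hx1
  have hstep : x ^ (3:ℝ) ≤ (x ^ c) ^ k := by
    have : (x ^ c) ^ k = x ^ (c * k) := by
      rw [Real.rpow_mul hx0, Real.rpow_natCast]
    rw [this]
    exact Real.rpow_le_rpow_of_exponent_le hx1 hk
  calc x ^ (3:ℝ) * Real.exp (-(x ^ c)) ≤ (x ^ c) ^ k * Real.exp (-(x ^ c)) :=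
        mul_le_mul_of_nonneg_right hstep (Real.exp_nonneg _)
  _ ≤ 1 := hx.le

lemma rpow_linear_ev {c K B : ℝ} (hc0 : 0 < c) (hc1 : c < 1) (hK : 0 < K) :
    ∀ᶠ x : ℝ in atTop, x ^ c ≤ K * x + B := by
  have h1 : Tendsto (fun x : ℝ => x ^ (1 - c)) atTop atTop := tendsto_rpow_atTop (by linarith)
  filter_upwards [h1.eventually_ge_atTop (2 / K), eventually_ge_atTop (1:ℝ),
    eventually_ge_atTop (-2 * B / K)] with x hx2 hx1 hxB
  have hx0 : (0:ℝ) < x := lt_of_lt_of_le one_pos hx1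
  have hpow : x ^ c = x / x ^ (1 - c) := by
    rw [eq_div_iff (ne_of_gt (Real.rpow_pos_of_pos hx0 _)), ← Real.rpow_add hx0,
      show c + (1 - c) = 1 by ring, Real.rpow_one]
  have h2 : (0:ℝ) < 2 / K := by positivity
  have h3 : x / x ^ (1 - c) ≤ x / (2 / K) := by
    apply div_le_div_of_nonneg_left hx0.le h2 hx2
  have h4 : x / (2 / K) = K / 2 * x := by field_simp
  have h6 : K / 2 * (-2 * B / K) = -B := by field_simp
  have h5 : K / 2 * x ≤ K * x + B := by
    have h7 : K / 2 * (-2 * B / K) ≤ K / 2 * x := by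
      apply mul_le_mul_of_nonneg_left hxB (by positivity)
    rw [h6] at h7
    nlinarith
  rw [hpow]
  calc x / x ^ (1 - c) ≤ x / (2 / K) := h3
  _ = K / 2 * x := h4
  _ ≤ K * x + B := h5

lemma chain3 {t e' w' f' e w f : ℝ} (ht : 0 < t) (h : t ≤ e' * w' * f') (he : e' ≤ e)
    (hw : w' ≤ w) (hf : f' ≤ f) (he' : 0 < e') (hw' : 0 < w') : t ≤ e * w * f := by
  have hf'0 : 0 < f' := by
    by_contra hcon
    push_neg at hcon
    have hle : e' * w' * f' ≤ 0 := mul_nonpos_of_nonneg_of_nonpos (by positivity) hcon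
    linarith
  have hepos : (0:ℝ) < e := lt_of_lt_of_le he' he
  have hwpos : (0:ℝ) < w := lt_of_lt_of_le hw' hw
  calc t ≤ e' * w' * f' := h
  _ ≤ e * w * f' := by
      have h1 : e' * w' ≤ e * w := mul_le_mul he hw hw'.le hepos.le
      exact mul_le_mul_of_nonneg_right h1 hf'0.le
  _ ≤ e * w * f := mul_le_mul_of_nonneg_left hf (by positivity)

lemma ev4_aux {ε γ δ CK c₄ : ℝ} (n₀ : ℕ) (hε0 : 0 < ε) (hγ : 0 < γ)
    (hδ : δ = ε * γ / 8) (hc₄ : 0 < c₄) :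
    ∀ᶠ x : ℝ in atTop,
      0 < ((n₀:ℝ) + 1) + Real.log x / γ ∧
      4 * (((n₀:ℝ) + 1) + Real.log x / γ) ≤ x ∧
      x ^ (ε/2) ≤ Real.exp (-(δ * (((n₀:ℝ)+1) + Real.log x / γ)) - CK) *
        (Real.exp (-(δ * (((n₀:ℝ)+1) + Real.log x / γ))) * c₄ * x ^ (-1 + ε)) *
        ((x - (((n₀:ℝ)+1) + Real.log x / γ)) / (2 * (((n₀:ℝ)+1) + Real.log x / γ)) - 1) := by
  set K : ℝ := Real.exp (-(2 * δ * ((n₀:ℝ) + 1)) - CK) * c₄ with hKdef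
  have hKpos : 0 < K := by positivity
  filter_upwards [log_linear_ev (4/γ) (4*((n₀:ℝ)+1)) (by positivity),
    log_rpow_ev (8/(γ*K)) (8*((n₀:ℝ)+1)/K) (ε/4) (by positivity),
    eventually_ge_atTop (1:ℝ)] with x hx4 hx8 hx1
  have hx0 : (0:ℝ) < x := lt_of_lt_of_le one_pos hx1
  have hlog0 : 0 ≤ Real.log x := Real.log_nonneg hx1
  set Λx : ℝ := ((n₀:ℝ) + 1) + Real.log x / γ with hΛdef
  have hΛ : 0 < Λx := by positivity
  have h4 : 4 * Λx ≤ x := by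
    have e1 : 4 * Λx = 4*((n₀:ℝ)+1) + 4/γ * Real.log x := by
      rw [hΛdef]; field_simp
    rw [e1]; exact hx4
  refine ⟨hΛ, h4, ?_⟩
  have h8 : 8 * Λx ≤ K * x ^ (ε/4) := by
    have e1 : K * (8*((n₀:ℝ)+1)/K + 8/(γ*K) * Real.log x) = 8 * Λx := by
      rw [hΛdef]; field_simp
    have := mul_le_mul_of_nonneg_left hx8 hKpos.le
    rw [e1] at this
    exact this
  set Q' : ℝ := (x - Λx) / (2 * Λx) - 1 with hQdef
  have hE : Real.exp (-(δ * Λx) - CK) * (Real.exp (-(δ * Λx)) * c₄) = K * x ^ (-(ε/4)) := by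
    rw [Real.rpow_def_of_pos hx0, hKdef]
    rw [show Real.exp (-(δ * Λx) - CK) * (Real.exp (-(δ * Λx)) * c₄)
        = Real.exp ((-(δ * Λx) - CK) + -(δ * Λx)) * c₄ by rw [Real.exp_add]; ring]
    rw [show Real.exp (-(2 * δ * ((n₀:ℝ) + 1)) - CK) * c₄ * Real.exp (Real.log x * -(ε/4))
        = Real.exp ((-(2 * δ * ((n₀:ℝ) + 1)) - CK) + Real.log x * -(ε/4)) * c₄ by
        rw [Real.exp_add]; ring]
    congr 2
    rw [hΛdef, hδ]
    field_simp
    ring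
  have hQ : x / (8 * Λx) ≤ Q' := by
    have e1 : Q' - x / (8 * Λx) = (3*x - 12*Λx) / (8 * Λx) := by
      rw [hQdef]; field_simp; ring
    have e2 : (0:ℝ) ≤ (3*x - 12*Λx) / (8 * Λx) := div_nonneg (by linarith) (by positivity)
    linarith [e1 ▸ e2]
  have hx34 : x ^ (-(ε/4)) * x ^ (-1+ε) * x = x ^ (ε/4) * x ^ (ε/2) := by
    have A : x ^ (-(ε/4)) * x ^ (-1+ε) = x ^ (-(ε/4) + (-1+ε)) := (Real.rpow_add hx0 _ _).symm
    have B : x ^ (-(ε/4) + (-1+ε)) * x ^ (1:ℝ) = x ^ ((-(ε/4) + (-1+ε)) + 1) :=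
      (Real.rpow_add hx0 _ _).symm
    have C : x ^ (ε/4) * x ^ (ε/2) = x ^ (ε/4 + ε/2) := (Real.rpow_add hx0 _ _).symm
    calc x ^ (-(ε/4)) * x ^ (-1+ε) * x = x ^ (-(ε/4) + (-1+ε)) * x ^ (1:ℝ) := by
          rw [A, Real.rpow_one]
    _ = x ^ ((-(ε/4) + (-1+ε)) + 1) := B
    _ = x ^ (ε/4 + ε/2) := by congr 1; ring
    _ = x ^ (ε/4) * x ^ (ε/2) := C.symm
  have e2 : K * x ^ (-(ε/4)) * x ^ (-1+ε) * (x / (8*Λx))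
      = K * (x ^ (ε/4) * x ^ (ε/2)) / (8*Λx) := by
    calc K * x ^ (-(ε/4)) * x ^ (-1+ε) * (x / (8*Λx))
        = K * (x ^ (-(ε/4)) * x ^ (-1+ε) * x) / (8*Λx) := by ring
    _ = K * (x ^ (ε/4) * x ^ (ε/2)) / (8*Λx) := by rw [hx34]
  have e4 : x ^ (ε/2) ≤ K * (x ^ (ε/4) * x ^ (ε/2)) / (8*Λx) := by
    rw [le_div_iff₀ (by positivity)]
    have e3 : (8*Λx) * x ^ (ε/2) ≤ (K * x ^ (ε/4)) * x ^ (ε/2) :=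
      mul_le_mul_of_nonneg_right h8 (Real.rpow_nonneg hx0.le _)
    calc x ^ (ε/2) * (8*Λx) = (8*Λx) * x ^ (ε/2) := by ring
    _ ≤ (K * x ^ (ε/4)) * x ^ (ε/2) := e3
    _ = K * (x ^ (ε/4) * x ^ (ε/2)) := by ring
  have e5 : K * x ^ (-(ε/4)) * x ^ (-1+ε) * (x / (8*Λx))
      ≤ K * x ^ (-(ε/4)) * x ^ (-1+ε) * Q' := by
    apply mul_le_mul_of_nonneg_left hQ
    have : (0:ℝ) < x ^ (-(ε/4)) := Real.rpow_pos_of_pos hx0 _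
    have : (0:ℝ) < x ^ (-1+ε) := Real.rpow_pos_of_pos hx0 _
    positivity
  have efin : Real.exp (-(δ * Λx) - CK) * (Real.exp (-(δ * Λx)) * c₄ * x ^ (-1+ε)) * Q'
      = K * x ^ (-(ε/4)) * x ^ (-1+ε) * Q' := by
    rw [show Real.exp (-(δ * Λx) - CK) * (Real.exp (-(δ * Λx)) * c₄ * x ^ (-1+ε)) * Q'
        = (Real.exp (-(δ * Λx) - CK) * (Real.exp (-(δ * Λx)) * c₄)) * x ^ (-1+ε) * Q' by ring,
      hE]
  rw [efin]
  calc x ^ (ε/2) ≤ K * (x ^ (ε/4) * x ^ (ε/2)) / (8*Λx) := e4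
  _ = K * x ^ (-(ε/4)) * x ^ (-1+ε) * (x / (8*Λx)) := e2.symm
  _ ≤ K * x ^ (-(ε/4)) * x ^ (-1+ε) * Q' := e5

end AnalyticAux

section SummAux

/-- Summability wrapper: bounded by 1 everywhere and by `1/N²` eventually. -/
lemma tsum_ne_top_aux {f : ℕ → ℝ≥0∞} (h1 : ∀ N, f N ≤ 1) {N₀ : ℕ}
    (h2 : ∀ N, N₀ ≤ N → f N ≤ ENNReal.ofReal (1 / (N : ℝ) ^ 2)) : ∑' N, f N ≠ ⊤ := by
  have hsum0 : Summable (fun n : ℕ => 1 / (n : ℝ) ^ 2) :=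
    Real.summable_one_div_nat_pow.mpr one_lt_two
  set g : ℕ → ℝ≥0∞ := fun n => if n < N₀ then 1 else 0 with hg
  set h : ℕ → ℝ≥0∞ := fun n => ENNReal.ofReal (1 / (n : ℝ) ^ 2) with hh
  have hfgh : ∀ n, f n ≤ g n + h n := by
    intro n
    by_cases hn : n < N₀
    · calc f n ≤ 1 := h1 n
      _ = g n := by simp [hg, hn]
      _ ≤ g n + h n := le_self_add
    · calc f n ≤ h n := h2 n (by omega)
      _ ≤ g n + h n := le_add_self
  have hgsum : ∑' n, g n ≠ ⊤ := by
    have : ∑' n, g n = ∑ n ∈ Finset.range N₀, g n := by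
      apply tsum_eq_sum
      intro b hb
      simp only [Finset.mem_range] at hb
      simp [hg, hb]
    rw [this]
    have hle : (∑ n ∈ Finset.range N₀, g n) ≤ ∑ _n ∈ Finset.range N₀, (1:ℝ≥0∞) :=
      Finset.sum_le_sum (fun i _ => show g i ≤ 1 by by_cases hi : i < N₀ <;> simp [hg, hi])
    refine ne_of_lt (lt_of_le_of_lt hle ?_)
    calc (∑ _i ∈ Finset.range N₀, (1:ℝ≥0∞)) = N₀ := by simp
    _ < ⊤ := ENNReal.natCast_lt_top N₀
  have hhsum : ∑' n, h n ≠ ⊤ := by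
    have : ∑' n, h n = ENNReal.ofReal (∑' n : ℕ, 1 / (n : ℝ) ^ 2) :=
      (ENNReal.ofReal_tsum_of_nonneg (fun i => by positivity) hsum0).symm
    rw [this]
    exact ne_of_lt ENNReal.ofReal_lt_top
  have hle2 : ∑' N, f N ≤ (∑' n, g n) + ∑' n, h n := by
    calc ∑' N, f N ≤ ∑' N, (g N + h N) := ENNReal.tsum_le_tsum hfgh
    _ = (∑' n, g n) + ∑' n, h n := ENNReal.tsum_add
  exact ne_top_of_le_ne_top (ENNReal.add_ne_top.mpr ⟨hgsum, hhsum⟩) hle2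

end SummAux

set_option maxHeartbeats 2000000 in
/-- **Summability bound (3.2).** Under (ID), (FE), (KB) for `ℙ` and `supp ℚ ⊆ supp ℙ`, for
every `y ∈ supp ℚ`, the probabilities `ℙ{x : c_N(y|x) > ĉ_N}` are summable in `N`, where
`ĉ_N` is the number of words in the upper-bound auxiliary parsing of `y_1^N`. -/
theorem cN_le_auxCount_summable {A : Type*} [Fintype A] [MeasurableSpace A]
    (μP μQ : Measure (ℕ → A)) [IsProbabilityMeasure μP] [IsProbabilityMeasure μQ]
    (hPstat : MeasurePreserving shift μP μP)
    (hQstat : MeasurePreserving shift μQ μQ)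
    (kP kKB τKB : ℕ → ℝ) (γP : ℝ)
    (hPID : CondID μP kP) (hPFE : CondFE μP γP) (hPKB : CondKB μP kKB τKB)
    (hsupp : suppSet μQ ⊆ suppSet μP)
    (ε : ℝ) (hε : 0 < ε ∧ ε < 1 / 2) (y : ℕ → A) (hy : y ∈ suppSet μQ) :
    (∑' N : ℕ, μP {x | auxCount μP ((N : ℝ) ^ (-1 + ε)) N y < cN N x y}) ≠ ⊤ := by
  obtain ⟨hε0, hε2⟩ := hε
  obtain ⟨hkPmono, hkPo, hID⟩ := hPID
  obtain ⟨hγP, hFE⟩ := hPFE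
  obtain ⟨hkKBo, hτo, hKB⟩ := hPKB
  have hγ0 : (0:ℝ) < -γP := by linarith
  have hyP : ∀ n, 0 < μP (cyl (seg y 0 n)) := hsupp hy
  have hpos : ∀ p ℓ, 0 < μP (cyl (seg y p ℓ)) := seg_pos hPstat hyP
  rw [eventually_atTop] at hFE
  obtain ⟨n₀, hn₀⟩ := hFE
  have hτhalf := hτo.def (show (0:ℝ) < 1/2 by norm_num)
  rw [eventually_atTop] at hτhalf
  obtain ⟨m₁, hm₁⟩ := hτhalf
  set m₂ := max m₁ 1 with hm₂def
  have hm₂1 : 1 ≤ m₂ := le_max_right _ _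
  set δ := ε * (-γP) / 8 with hδdef
  have hδ0 : 0 < δ := by positivity
  obtain ⟨CK, hCK0, hCK⟩ := littleo_linear hkKBo hδ0
  obtain ⟨CP, hCP0, hCP⟩ := littleo_linear hkPo hδ0
  obtain ⟨c₀, hc₀, hc₀le⟩ := exists_rho μP y hpos 1
  obtain ⟨ρ, hρ, hρle⟩ := exists_rho μP y hpos m₂
  set c₄ := min 1 (Real.exp (-CP) * c₀) with hc₄def
  have hc₄0 : 0 < c₄ := lt_min one_pos (by positivity)
  have hτm₂ : |τKB m₂| ≤ 1/2 * m₂ := by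
    have h := hm₁ m₂ (le_max_left _ _)
    rwa [Real.norm_eq_abs, Real.norm_eq_abs,
      abs_of_nonneg (by positivity : (0:ℝ) ≤ (m₂:ℝ))] at h
  have hD0 : (0:ℝ) < (m₂:ℝ) + τKB m₂ := by
    have h1 := (abs_le.mp hτm₂).1
    have h2 : (1:ℝ) ≤ m₂ := by exact_mod_cast hm₂1
    linarith
  -- eventual facts
  have hEV3r : ∀ᶠ x : ℝ in atTop,
      x ^ (ε/2) ≤ Real.exp (-kKB m₂) * ρ * ((x - m₂ + 1)/((m₂:ℝ) + τKB m₂) - 1) := by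
    have hev := rpow_linear_ev (c := ε/2)
      (K := Real.exp (-kKB m₂) * ρ / ((m₂:ℝ) + τKB m₂))
      (B := Real.exp (-kKB m₂) * ρ * ((1 - m₂)/((m₂:ℝ) + τKB m₂) - 1))
      (by positivity) (by linarith) (by positivity)
    filter_upwards [hev] with x hx
    have e1 : Real.exp (-kKB m₂) * ρ * ((x - m₂ + 1)/((m₂:ℝ) + τKB m₂) - 1)
        = Real.exp (-kKB m₂) * ρ / ((m₂:ℝ) + τKB m₂) * x
          + Real.exp (-kKB m₂) * ρ * ((1 - m₂)/((m₂:ℝ) + τKB m₂) - 1) := by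
      field_simp
      ring
    rw [e1]; exact hx
  have hEV3 : ∀ᶠ N : ℕ in atTop, ((N:ℝ)) ^ (ε/2)
      ≤ Real.exp (-kKB m₂) * ρ * (((N:ℝ) - m₂ + 1)/((m₂:ℝ) + τKB m₂) - 1) :=
    tendsto_natCast_atTop_atTop.eventually hEV3r
  have hEV4 : ∀ᶠ N : ℕ in atTop,
      0 < ((n₀:ℝ) + 1) + Real.log (N:ℝ) / (-γP) ∧
      4 * (((n₀:ℝ) + 1) + Real.log (N:ℝ) / (-γP)) ≤ (N:ℝ) ∧
      (N:ℝ) ^ (ε/2) ≤ Real.exp (-(δ * (((n₀:ℝ)+1) + Real.log (N:ℝ) / (-γP))) - CK) *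
        (Real.exp (-(δ * (((n₀:ℝ)+1) + Real.log (N:ℝ) / (-γP)))) * c₄ * (N:ℝ) ^ (-1 + ε)) *
        (((N:ℝ) - (((n₀:ℝ)+1) + Real.log (N:ℝ) / (-γP))) /
          (2 * (((n₀:ℝ)+1) + Real.log (N:ℝ) / (-γP))) - 1) :=
    tendsto_natCast_atTop_atTop.eventually (ev4_aux n₀ hε0 hγ0 hδdef hc₄0)
  have hEV5 : ∀ᶠ N : ℕ in atTop, ((N:ℝ)) ^ (3:ℝ) * Real.exp (-((N:ℝ) ^ (ε/2))) ≤ 1 :=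
    tendsto_natCast_atTop_atTop.eventually (pow_exp_ev (by positivity))
  -- the main eventual bound
  have main : ∀ᶠ N : ℕ in atTop,
      μP {x | auxCount μP ((N : ℝ) ^ (-1 + ε)) N y < cN N x y}
        ≤ ENNReal.ofReal (1 / (N:ℝ)^2) := by
    filter_upwards [hEV3, hEV4, hEV5, eventually_ge_atTop (m₂ + 2), eventually_ge_atTop 2]
      with N hN3 hN4 hN5 hNm hN2
    have hN1 : (1:ℝ) ≤ (N:ℝ) := by exact_mod_cast (show 1 ≤ N by omega)
    have hN0 : (0:ℝ) < N := by linarith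
    set θ : ℝ := (N:ℝ) ^ (-1 + ε) with hθdef
    have hθ0 : 0 < θ := Real.rpow_pos_of_pos hN0 _
    set ΛN : ℝ := ((n₀:ℝ) + 1) + Real.log (N:ℝ) / (-γP) with hΛNdef
    obtain ⟨hΛpos, h4Λ, hmain4⟩ := hN4
    set chat := auxCount μP θ N y with hchatdef
    -- per-word bound
    have step3 : ∀ j, j < chat → μP {x | ¬ appears N x
        (seg y (auxPos μP θ N y j) (auxWordLen μP θ N y j))}
        ≤ ENNReal.ofReal (Real.exp (-((N:ℝ) ^ (ε/2)))) := by
      intro j hj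
      set q := auxPos μP θ N y j with hqdef
      set L := auxWordLen μP θ N y j with hLdef
      have hqN : q < N := auxPos_lt_of_lt_auxCount μP θ N y j hj
      have hqLN : q + L ≤ N := by
        have h1 := auxPos_succ_le μP θ N y j hqN
        have h2 : auxPos μP θ N y (j+1) = q + L := rfl
        omega
      have hL1 : 1 ≤ L := le_max_left _ _
      by_cases hLm : L ≤ m₂
      · -- short word: pass to the extension of length m₂
        have hsub2 : {x : ℕ → A | ¬ appears N x (seg y q L)}
            ⊆ {x | ¬ appears N x (seg y q m₂)} :=
          fun x hx hap => hx (appears_infix N x y hap le_rfl (by omega))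
        have hm₂N : m₂ ≤ N := by omega
        have hKBap := measure_not_appears_le μP kKB τKB hKB N m₂ hm₂N (seg y q m₂)
        refine le_trans (measure_mono hsub2) (le_trans hKBap ?_)
        apply ENNReal.ofReal_le_ofReal
        apply Real.exp_le_exp.mpr
        rw [neg_le_neg_iff]
        have hcast : ((N - m₂ + 2 : ℕ) : ℝ) = (N:ℝ) - m₂ + 2 := by
          push_cast [hm₂N]; ring
        rw [hcast, show (N:ℝ) - m₂ + 2 - 1 = (N:ℝ) - m₂ + 1 by ring]
        have hFge : ((N:ℝ) - m₂ + 1)/((m₂:ℝ) + τKB m₂) - 1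
            ≤ ((⌊((N:ℝ) - m₂ + 1)/((m₂:ℝ) + τKB m₂)⌋ : ℤ) : ℝ) :=
          (Int.sub_one_lt_floor _).le
        exact chain3 (Real.rpow_pos_of_pos hN0 _) hN3 le_rfl (hρle q) hFge
          (Real.exp_pos _) hρ
      · -- long word
        push_neg at hLm
        have hL2 : 2 ≤ L := by omega
        have hτL : |τKB L| ≤ 1/2 * L := by
          have h := hm₁ L (by omega)
          rwa [Real.norm_eq_abs, Real.norm_eq_abs,
            abs_of_nonneg (by positivity : (0:ℝ) ≤ (L:ℝ))] at h
        have hLR1 : (1:ℝ) ≤ (L:ℝ) := by exact_mod_cast hL1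
        have hDL0 : (0:ℝ) < (L:ℝ) + τKB L := by
          have h1 := (abs_le.mp hτL).1
          linarith
        have hdich : (wp μP (seg y q L) ≤ θ ∧ (2 ≤ L → θ < wp μP (seg y q (L-1)))) ∨
            θ < wp μP (seg y q L) := auxWord_dichotomy μP θ N y j hqN
        -- lower bound on the word probability
        have hwp : Real.exp (-(δ * L)) * c₄ * θ ≤ wp μP (seg y q L) := by
          rcases hdich with ⟨hA1, hA2⟩ | hB
          · have hpre := hA2 hL2
            obtain ⟨n, hn⟩ : ∃ n, L = n + 1 := ⟨L - 1, by omega⟩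
            have hpren : θ < wp μP (seg y q n) := by
              have he : L - 1 = n := by omega
              rwa [he] at hpre
            have hida := (hID n 1 (seg y q n) (seg y (q+n) 1) (hpos q n) (hpos (q+n) 1)).2
            have happos : 0 < μP (cyl (Fin.append (seg y q n) (seg y (q+n) 1))) := by
              rw [seg_append]; exact hpos q (n+1)
            have hlow := hida happos
            rw [seg_append] at hlow
            have hword : wp μP (seg y q L) = wp μP (seg y q (n+1)) := by rw [hn]
            rw [hword]
            have s1 : Real.exp (-(δ * L)) ≤ Real.exp (-(δ * n)) := by
              apply Real.exp_le_exp.mpr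
              have hnL : (n:ℝ) ≤ (L:ℝ) := by exact_mod_cast (show n ≤ L by omega)
              nlinarith
            have s2 : c₄ ≤ Real.exp (-CP) * c₀ := min_le_right _ _
            have s3 : Real.exp (-(δ*n)) * (Real.exp (-CP) * c₀) ≤ Real.exp (-kP n) * c₀ := by
              have h' : Real.exp (-(δ*n) + -CP) ≤ Real.exp (-kP n) :=
                Real.exp_le_exp.mpr (by have := hCP n; linarith)
              rw [← mul_assoc, ← Real.exp_add]
              exact mul_le_mul_of_nonneg_right h' hc₀.le
            calc Real.exp (-(δ * L)) * c₄ * θ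
                ≤ Real.exp (-(δ * n)) * (Real.exp (-CP) * c₀) * θ := by
                  apply mul_le_mul_of_nonneg_right _ hθ0.le
                  exact mul_le_mul s1 s2 hc₄0.le (Real.exp_nonneg _)
            _ ≤ Real.exp (-kP n) * c₀ * θ := mul_le_mul_of_nonneg_right s3 hθ0.le
            _ = Real.exp (-kP n) * (θ * c₀) := by ring
            _ ≤ Real.exp (-kP n) * (wp μP (seg y q n) * wp μP (seg y (q+n) 1)) := by
                  apply mul_le_mul_of_nonneg_left _ (Real.exp_nonneg _)
                  exact mul_le_mul hpren.le (hc₀le (q+n)) hc₀.le (wp_nonneg μP _)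
            _ ≤ wp μP (seg y q (n+1)) := hlow
          · have s1 : Real.exp (-(δ * L)) ≤ 1 := by
              apply Real.exp_le_one_iff.mpr
              have : (0:ℝ) ≤ (L:ℝ) := by positivity
              nlinarith
            have s2 : c₄ ≤ 1 := min_le_left _ _
            calc Real.exp (-(δ * L)) * c₄ * θ ≤ 1 * 1 * θ := by
                  apply mul_le_mul_of_nonneg_right _ hθ0.le
                  exact mul_le_mul s1 s2 hc₄0.le one_pos.le
            _ = θ := by ring
            _ ≤ wp μP (seg y q L) := hB.le
        -- length bound
        have hlen : (L:ℝ) ≤ ΛN := by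
          obtain ⟨ℓ'', hw1, hw2, hwit⟩ : ∃ ℓ'', L ≤ ℓ'' + 1 ∧ ℓ'' ≤ L ∧
              θ < wp μP (seg y q ℓ'') := by
            rcases hdich with ⟨hA1, hA2⟩ | hB
            · exact ⟨L - 1, by omega, by omega, hA2 hL2⟩
            · exact ⟨L, by omega, le_rfl, hB⟩
          have hlogN0 : 0 ≤ Real.log N := Real.log_nonneg hN1
          by_cases hn0 : ℓ'' < n₀
          · have hLn : (L:ℝ) ≤ (n₀:ℝ) := by exact_mod_cast (show L ≤ n₀ by omega)
            rw [hΛNdef]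
            have hdiv : 0 ≤ Real.log N / (-γP) := by positivity
            linarith
          · push_neg at hn0
            have hfe := hn₀ ℓ'' hn0 (seg y q ℓ'') (hpos q ℓ'')
            have hNinv : (N:ℝ) ^ (-(1:ℝ)) ≤ θ := by
              rw [hθdef]
              exact Real.rpow_le_rpow_of_exponent_le hN1 (by linarith)
            have hlt : Real.exp (Real.log (N:ℝ) * (-(1:ℝ))) < Real.exp (γP * ℓ'') := by
              calc Real.exp (Real.log (N:ℝ) * (-(1:ℝ))) = (N:ℝ) ^ (-(1:ℝ)) :=
                    (Real.rpow_def_of_pos hN0 _).symm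
              _ ≤ θ := hNinv
              _ < wp μP (seg y q ℓ'') := hwit
              _ ≤ Real.exp (γP * ℓ'') := hfe
            have hlt2 : Real.log (N:ℝ) * (-(1:ℝ)) < γP * ℓ'' := Real.exp_lt_exp.mp hlt
            have hℓlt : (ℓ'':ℝ) < Real.log N / (-γP) := by
              rw [lt_div_iff₀ hγ0]
              nlinarith
            have hLℓ : (L:ℝ) ≤ (ℓ'':ℝ) + 1 := by exact_mod_cast hw1
            rw [hΛNdef]
            have hcast0 : (0:ℝ) ≤ (n₀:ℝ) := Nat.cast_nonneg _
            linarith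
        -- apply KB and conclude
        have hLN : L ≤ N := by omega
        have hKBap := measure_not_appears_le μP kKB τKB hKB N L hLN (seg y q L)
        refine le_trans hKBap ?_
        apply ENNReal.ofReal_le_ofReal
        apply Real.exp_le_exp.mpr
        rw [neg_le_neg_iff]
        have hcast : ((N - L + 2 : ℕ) : ℝ) = (N:ℝ) - L + 2 := by push_cast [hLN]; ring
        rw [hcast, show (N:ℝ) - L + 2 - 1 = (N:ℝ) - L + 1 by ring]
        have hFge : ((N:ℝ) - ΛN)/(2*ΛN) - 1
            ≤ ((⌊((N:ℝ) - L + 1)/((L:ℝ) + τKB L)⌋ : ℤ) : ℝ) := by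
          have h1 := (Int.sub_one_lt_floor (((N:ℝ) - L + 1)/((L:ℝ) + τKB L))).le
          have h2 : ((N:ℝ) - ΛN)/(2*ΛN) ≤ ((N:ℝ) - L + 1)/((L:ℝ) + τKB L) := by
            apply div_le_div₀
            · have hLNr : (L:ℝ) ≤ (N:ℝ) := by exact_mod_cast hLN
              linarith
            · linarith
            · exact hDL0
            · have h3 := (abs_le.mp hτL).2
              linarith
          linarith
        have hexp1 : Real.exp (-(δ * ΛN) - CK) ≤ Real.exp (-kKB L) := by
          apply Real.exp_le_exp.mpr
          have h5 := hCK L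
          have hδL : δ * L ≤ δ * ΛN := mul_le_mul_of_nonneg_left hlen hδ0.le
          linarith
        have hwp2 : Real.exp (-(δ * ΛN)) * c₄ * θ ≤ wp μP (seg y q L) := by
          refine le_trans ?_ hwp
          apply mul_le_mul_of_nonneg_right _ hθ0.le
          apply mul_le_mul_of_nonneg_right _ hc₄0.le
          apply Real.exp_le_exp.mpr
          have hδL : δ * L ≤ δ * ΛN := mul_le_mul_of_nonneg_left hlen hδ0.le
          linarith
        exact chain3 (Real.rpow_pos_of_pos hN0 _) hmain4 hexp1 hwp2 hFge
          (Real.exp_pos _) (by positivity)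
    -- union bound
    have hsubE : {x : ℕ → A | chat < cN N x y} ⊆ ⋃ j ∈ Finset.range chat,
        {x : ℕ → A | ¬ appears N x (seg y (auxPos μP θ N y j) (auxWordLen μP θ N y j))} := by
      intro x hx
      by_contra hxu
      simp only [Set.mem_iUnion, Set.mem_setOf_eq, Finset.mem_range, exists_prop,
        not_exists, not_and, not_not] at hxu
      have hcle : cN N x y ≤ chat := by
        apply cN_le_auxCount_of_appears
        intro j hjq hj2
        exact hxu j (lt_auxCount_of_pos_lt μP θ N y j hjq)
      have hx' : chat < cN N x y := hx
      omega
    have hbound : μP {x | chat < cN N x y}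
        ≤ ENNReal.ofReal ((N:ℝ) * Real.exp (-((N:ℝ) ^ (ε/2)))) := by
      calc μP {x | chat < cN N x y}
          ≤ μP (⋃ j ∈ Finset.range chat,
            {x : ℕ → A | ¬ appears N x (seg y (auxPos μP θ N y j) (auxWordLen μP θ N y j))}) :=
            measure_mono hsubE
      _ ≤ ∑ j ∈ Finset.range chat, μP {x : ℕ → A | ¬ appears N x
            (seg y (auxPos μP θ N y j) (auxWordLen μP θ N y j))} :=
            measure_biUnion_finset_le _ _
      _ ≤ ∑ _j ∈ Finset.range chat, ENNReal.ofReal (Real.exp (-((N:ℝ) ^ (ε/2)))) :=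
            Finset.sum_le_sum (fun j hj => step3 j (Finset.mem_range.mp hj))
      _ = (chat : ℝ≥0∞) * ENNReal.ofReal (Real.exp (-((N:ℝ) ^ (ε/2)))) := by
            rw [Finset.sum_const, Finset.card_range, nsmul_eq_mul]
      _ ≤ (N : ℝ≥0∞) * ENNReal.ofReal (Real.exp (-((N:ℝ) ^ (ε/2)))) := by
            apply mul_le_mul_left
            exact_mod_cast Nat.cast_le.mpr (auxCount_le μP θ N y)
      _ = ENNReal.ofReal ((N:ℝ) * Real.exp (-((N:ℝ) ^ (ε/2)))) := by
            rw [ENNReal.ofReal_mul (by positivity), ENNReal.ofReal_natCast]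
    refine le_trans hbound (ENNReal.ofReal_le_ofReal ?_)
    -- N * exp(-N^(ε/2)) ≤ 1/N²
    have h3 : ((N:ℝ)) ^ (3:ℝ) = (N:ℝ)^(3:ℕ) := by
      rw [show (3:ℝ) = ((3:ℕ):ℝ) by norm_num, Real.rpow_natCast]
    rw [h3] at hN5
    rw [le_div_iff₀ (by positivity : (0:ℝ) < (N:ℝ)^2)]
    nlinarith [Real.exp_nonneg (-((N:ℝ) ^ (ε/2)))]
  rw [eventually_atTop] at main
  obtain ⟨N₀, hN₀⟩ := main
  exact tsum_ne_top_aux (fun N => prob_le_one) hN₀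

end ZM
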